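/- arXiv:1703.01044 — 2 statements merged into one kernel-verified Lean document; each statement's English description precedes it below -/
import Mathlib

section
/- Let b₀ > 0, a₀ > 0, a₁ > 0, a₂ > 0, W ≥ 0, and let D₁, D₂ be nonnegative integers with a₀ + D₁ + D₂ > 1. Let (λ₁, λ₂) have the Beta-Gamma distribution BG(W + b₀, a₀ + D₁ + D₂, a₁ + D₁, a₂ + D₂). If a₁ + D₁ > 1, then E[1/λ₁] = (a₁ + a₂ + D₁ + D₂ − 1)(W + b₀) / ((a₀ + D₁ + D₂ − 1)(a₁ + D₁ − 1)); and if a₂ + D₂ > 1, then E[1/λ₂] = (a₁ + a₂ + D₁ + D₂ − 1)(W + b₀) / ((a₀ + D₁ + D₂ − 1)(a₂ + D₂ − 1)). These are the Bayes estimates θ̂_{1B} and θ̂_{2B} of θ₁ = 1/λ₁ and θ₂ = 1/λ₂ under squared error loss. -/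
open MeasureTheory

open Set Real
open scoped ENNReal NNReal

/-- Joint density of the Beta-Gamma distribution `BG(b₀, a₀, a₁, a₂)` on `(0,∞)²`. -/
noncomputable def bgPdf (b₀ a₀ a₁ a₂ l₁ l₂ : ℝ) : ℝ :=
  if 0 < l₁ ∧ 0 < l₂ then
    Real.Gamma (a₁ + a₂) / Real.Gamma a₀ * (b₀ * (l₁ + l₂)) ^ (a₀ - a₁ - a₂) *
      (b₀ ^ a₁ / Real.Gamma a₁ * l₁ ^ (a₁ - 1) * Real.exp (-b₀ * l₁)) *
      (b₀ ^ a₂ / Real.Gamma a₂ * l₂ ^ (a₂ - 1) * Real.exp (-b₀ * l₂))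
  else 0

/-- The Beta-Gamma distribution `BG(b₀, a₀, a₁, a₂)` as a measure on `ℝ × ℝ`. -/
noncomputable def bgMeasure (b₀ a₀ a₁ a₂ : ℝ) : Measure (ℝ × ℝ) :=
  volume.withDensity fun p => ENNReal.ofReal (bgPdf b₀ a₀ a₁ a₂ p.1 p.2)

lemma real_betaIntegral {a b : ℝ} (ha : 0 < a) (hb : 0 < b) :
    ∫ x in Ioo (0:ℝ) 1, x ^ (a - 1) * (1 - x) ^ (b - 1) =
      Real.Gamma a * Real.Gamma b / Real.Gamma (a + b) := by
  have key : Complex.betaIntegral a b =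
      ((∫ x in (0:ℝ)..1, x ^ (a - 1) * (1 - x) ^ (b - 1) : ℝ) : ℂ) := by
    rw [Complex.betaIntegral, ← intervalIntegral.integral_ofReal]
    apply intervalIntegral.integral_congr
    intro x hx
    rw [uIcc_of_le zero_le_one] at hx
    simp only []
    rw [Complex.ofReal_mul, Complex.ofReal_cpow hx.1,
      Complex.ofReal_cpow (by linarith [hx.2] : (0:ℝ) ≤ 1 - x)]
    push_cast
    ring
  have h := Complex.Gamma_mul_Gamma_eq_betaIntegral
    (s := (a : ℂ)) (t := (b : ℂ)) (by simpa using ha) (by simpa using hb)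
  rw [key, ← Complex.ofReal_add, Complex.Gamma_ofReal, Complex.Gamma_ofReal,
    Complex.Gamma_ofReal, ← Complex.ofReal_mul, ← Complex.ofReal_mul,
    Complex.ofReal_inj] at h
  have hG : Real.Gamma (a + b) ≠ 0 := (Real.Gamma_pos_of_pos (by linarith)).ne'
  rw [intervalIntegral.integral_of_le zero_le_one, integral_Ioc_eq_integral_Ioo] at h
  rw [eq_div_iff hG, mul_comm]
  exact h.symm

lemma integrableOn_beta {a b : ℝ} (ha : 0 < a) (hb : 0 < b) :
    IntegrableOn (fun x : ℝ => x ^ (a - 1) * (1 - x) ^ (b - 1)) (Ioo 0 1) := by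
  have h := (intervalIntegrable_iff_integrableOn_Ioo_of_le zero_le_one).mp
    (Complex.betaIntegral_convergent (u := (a:ℂ)) (v := (b:ℂ))
      (by simpa using ha) (by simpa using hb))
  have h2 : IntegrableOn
      (fun x : ℝ => RCLike.re ((x:ℂ) ^ ((a:ℂ) - 1) * (1 - (x:ℂ)) ^ ((b:ℂ) - 1)))
      (Ioo 0 1) := h.re
  apply h2.congr_fun ?_ measurableSet_Ioo
  intro x hx
  show RCLike.re ((x:ℂ) ^ ((a:ℂ) - 1) * (1 - (x:ℂ)) ^ ((b:ℂ) - 1)) = x ^ (a - 1) * (1 - x) ^ (b - 1)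
  rw [show ((x:ℂ) ^ ((a:ℂ) - 1) * (1 - (x:ℂ)) ^ ((b:ℂ) - 1)) =
      ((x ^ (a - 1) * (1 - x) ^ (b - 1) : ℝ) : ℂ) by
    rw [Complex.ofReal_mul, Complex.ofReal_cpow hx.1.le,
      Complex.ofReal_cpow (by linarith [hx.2] : (0:ℝ) ≤ 1 - x)]
    push_cast; ring]
  simp

lemma lintegral_beta {a b : ℝ} (ha : 0 < a) (hb : 0 < b) :
    ∫⁻ x in Ioo (0:ℝ) 1, ENNReal.ofReal
      (Real.Gamma (a + b) / (Real.Gamma a * Real.Gamma b) *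
        (x ^ (a - 1) * (1 - x) ^ (b - 1))) = 1 := by
  have hGa := Real.Gamma_pos_of_pos ha
  have hGb := Real.Gamma_pos_of_pos hb
  have hGab := Real.Gamma_pos_of_pos (by linarith : (0:ℝ) < a + b)
  rw [← ofReal_integral_eq_lintegral_ofReal ((integrableOn_beta ha hb).const_mul _) ?_]
  · rw [integral_const_mul, real_betaIntegral ha hb]
    rw [show Real.Gamma (a + b) / (Real.Gamma a * Real.Gamma b) *
        (Real.Gamma a * Real.Gamma b / Real.Gamma (a + b)) = 1 by field_simp]
    simp
  · filter_upwards [self_mem_ae_restrict measurableSet_Ioo] with x hx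
    exact mul_nonneg (div_pos hGab (mul_pos hGa hGb)).le
      (mul_nonneg (rpow_nonneg hx.1.le _) (rpow_nonneg (by linarith [hx.2]) _))

lemma lintegral_gammaPdf {a r : ℝ} (ha : 0 < a) (hr : 0 < r) :
    ∫⁻ x in Ioi (0:ℝ), ENNReal.ofReal
      (r ^ a / Real.Gamma a * (x ^ (a - 1) * Real.exp (-(r * x)))) = 1 := by
  have hint : IntegrableOn (fun x : ℝ => x ^ (a - 1) * Real.exp (-(r * x))) (Ioi 0) := by
    have h := integrableOn_rpow_mul_exp_neg_mul_rpow (p := 1) (s := a - 1) (b := r)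
      (by linarith) zero_lt_one hr
    apply h.congr_fun ?_ measurableSet_Ioi
    intro x hx
    simp only [Real.rpow_one, neg_mul]
  rw [← ofReal_integral_eq_lintegral_ofReal (hint.const_mul _) ?_]
  · rw [integral_const_mul, integral_rpow_mul_exp_neg_mul_Ioi ha hr]
    rw [div_rpow zero_le_one hr.le, one_rpow]
    have h1 : Real.Gamma a ≠ 0 := (Real.Gamma_pos_of_pos ha).ne'
    have h2 : r ^ a ≠ 0 := (Real.rpow_pos_of_pos hr a).ne'
    rw [show r ^ a / Real.Gamma a * (1 / r ^ a * Real.Gamma a) = 1 by field_simp]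
    simp
  · filter_upwards [self_mem_ae_restrict measurableSet_Ioi] with x hx
    exact mul_nonneg (div_nonneg (rpow_nonneg hr.le a) (Real.Gamma_nonneg_of_nonneg ha.le))
      (mul_nonneg (rpow_nonneg (le_of_lt hx) _) (Real.exp_pos _).le)

/-- The substitution map `(u, t) ↦ (t*u, t*(1-u))`. -/
def bgMap (q : ℝ × ℝ) : ℝ × ℝ := (q.2 * q.1, q.2 * (1 - q.1))

noncomputable def bgDeriv (q : ℝ × ℝ) : ℝ × ℝ →L[ℝ] ℝ × ℝ :=
  LinearMap.toContinuousLinearMap (Matrix.toLin (Module.Basis.finTwoProd ℝ) (Module.Basis.finTwoProd ℝ)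
    !![q.2, q.1; -q.2, 1 - q.1])

lemma hasFDerivAt_bgMap (q : ℝ × ℝ) : HasFDerivAt bgMap (bgDeriv q) q := by
  rw [bgDeriv, Matrix.toLin_finTwoProd_toContinuousLinearMap]
  convert HasFDerivAt.prodMk (𝕜 := ℝ)
    ((hasFDerivAt_snd (𝕜 := ℝ) (p := q)).fun_mul (hasFDerivAt_fst (𝕜 := ℝ) (p := q)))
    ((hasFDerivAt_snd (𝕜 := ℝ) (p := q)).fun_mul ((hasFDerivAt_const (1:ℝ) q).fun_sub (hasFDerivAt_fst (𝕜 := ℝ) (p := q)))) using 2 <;>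
  first
  | rfl
  | simp [smul_smul, add_comm, neg_mul, smul_neg, sub_eq_add_neg,
      neg_smul _ (ContinuousLinearMap.fst ℝ ℝ ℝ)]

lemma bgDeriv_det (q : ℝ × ℝ) : (bgDeriv q).det = q.2 := by
  simp only [bgDeriv, LinearMap.det_toContinuousLinearMap, LinearMap.det_toLin,
    Matrix.det_fin_two_of]
  ring

lemma bgMap_image : bgMap '' (Ioo (0:ℝ) 1 ×ˢ Ioi (0:ℝ)) = Ioi (0:ℝ) ×ˢ Ioi (0:ℝ) := by
  ext ⟨x, y⟩
  constructor
  · rintro ⟨⟨u, t⟩, ⟨hu, ht⟩, heq⟩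
    rw [← heq]
    simp only [mem_Ioo, mem_Ioi, bgMap, mem_prod] at hu ht ⊢
    exact ⟨mul_pos ht hu.1, mul_pos ht (by linarith [hu.2])⟩
  · rintro ⟨hx, hy⟩
    simp only [mem_Ioi] at hx hy
    have hxy : (0:ℝ) < x + y := by linarith
    refine ⟨(x / (x + y), x + y), ⟨⟨div_pos hx hxy, (div_lt_one hxy).mpr (by linarith)⟩, hxy⟩, ?_⟩
    simp only [bgMap, Prod.mk.injEq]
    constructor
    · field_simp
    · field_simp
      ring
  
lemma bgMap_injOn : InjOn bgMap (Ioo (0:ℝ) 1 ×ˢ Ioi (0:ℝ)) := by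
  rintro ⟨u, t⟩ ⟨hu, ht⟩ ⟨u', t'⟩ ⟨hu', ht'⟩ heq
  have e1 : t * u = t' * u' := congrArg Prod.fst heq
  have e2 : t * (1 - u) = t' * (1 - u') := congrArg Prod.snd heq
  have htt : t = t' := by linear_combination e1 + e2
  have ht0 : t ≠ 0 := ne_of_gt ht
  have : u = u' := by
    subst htt
    exact mul_left_cancel₀ ht0 e1
  simp [this, htt]
lemma bgPdf_substitution {b a₀ a₁ a₂ u t : ℝ} (hb : 0 < b) (hu : u ∈ Ioo (0:ℝ) 1)
    (ht : t ∈ Ioi (0:ℝ)) :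
    t * bgPdf b a₀ a₁ a₂ (t * u) (t * (1 - u)) =
      Real.Gamma (a₁ + a₂) / (Real.Gamma a₁ * Real.Gamma a₂) *
          (u ^ (a₁ - 1) * (1 - u) ^ (a₂ - 1)) *
        (b ^ a₀ / Real.Gamma a₀ * (t ^ (a₀ - 1) * Real.exp (-(b * t)))) := by
  obtain ⟨hu0, hu1⟩ := hu
  have ht0 : (0:ℝ) < t := ht
  have hv : (0:ℝ) < 1 - u := by linarith
  rw [bgPdf, if_pos ⟨mul_pos ht0 hu0, mul_pos ht0 hv⟩]
  rw [show t * u + t * (1 - u) = t by ring]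
  rw [Real.mul_rpow hb.le ht0.le, Real.mul_rpow ht0.le hu0.le, Real.mul_rpow ht0.le hv.le]
  have hbb : b ^ a₀ = b ^ (a₀ - a₁ - a₂) * b ^ a₁ * b ^ a₂ := by
    rw [← Real.rpow_add hb, ← Real.rpow_add hb]; congr 1; ring
  have htt : t ^ (a₀ - 1) = t ^ (a₀ - a₁ - a₂) * t ^ (a₁ - 1) * t ^ (a₂ - 1) * t := by
    rw [← Real.rpow_add ht0, ← Real.rpow_add ht0, ← Real.rpow_add_one (ne_of_gt ht0)]
    congr 1; ring
  have hE : Real.exp (-(b * t)) = Real.exp (-b * (t * u)) * Real.exp (-b * (t * (1 - u))) := by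
    rw [← Real.exp_add]; congr 1; ring
  rw [hbb, htt, hE]
  ring

lemma lintegral_bgPdf_eq_one {b a₀ a₁ a₂ : ℝ} (hb : 0 < b) (h0 : 0 < a₀) (h1 : 0 < a₁)
    (h2 : 0 < a₂) :
    ∫⁻ p : ℝ × ℝ, ENNReal.ofReal (bgPdf b a₀ a₁ a₂ p.1 p.2) = 1 := by
  have hset : MeasurableSet (Ioi (0:ℝ) ×ˢ Ioi (0:ℝ)) :=
    measurableSet_Ioi.prod measurableSet_Ioi
  have hsset : MeasurableSet (Ioo (0:ℝ) 1 ×ˢ Ioi (0:ℝ)) :=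
    measurableSet_Ioo.prod measurableSet_Ioi
  have step0 : ∫⁻ p : ℝ × ℝ, ENNReal.ofReal (bgPdf b a₀ a₁ a₂ p.1 p.2) =
      ∫⁻ p : ℝ × ℝ in Ioi (0:ℝ) ×ˢ Ioi (0:ℝ), ENNReal.ofReal (bgPdf b a₀ a₁ a₂ p.1 p.2) := by
    rw [← lintegral_indicator hset]
    congr 1
    funext p
    by_cases hp : p ∈ Ioi (0:ℝ) ×ˢ Ioi (0:ℝ)
    · rw [indicator_of_mem hp]
    · rw [indicator_of_notMem hp]
      have : ¬(0 < p.1 ∧ 0 < p.2) := by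
        simpa [mem_prod, mem_Ioi] using hp
      rw [bgPdf, if_neg this, ENNReal.ofReal_zero]
  rw [step0, ← bgMap_image,
    lintegral_image_eq_lintegral_abs_det_fderiv_mul volume hsset
      (fun q _ => (hasFDerivAt_bgMap q).hasFDerivWithinAt) bgMap_injOn]
  have step1 : ∫⁻ q : ℝ × ℝ in Ioo (0:ℝ) 1 ×ˢ Ioi (0:ℝ),
      ENNReal.ofReal |(bgDeriv q).det| * ENNReal.ofReal (bgPdf b a₀ a₁ a₂ (bgMap q).1 (bgMap q).2) =
      ∫⁻ q : ℝ × ℝ in Ioo (0:ℝ) 1 ×ˢ Ioi (0:ℝ),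
        ENNReal.ofReal (Real.Gamma (a₁ + a₂) / (Real.Gamma a₁ * Real.Gamma a₂) *
            (q.1 ^ (a₁ - 1) * (1 - q.1) ^ (a₂ - 1))) *
          ENNReal.ofReal (b ^ a₀ / Real.Gamma a₀ * (q.2 ^ (a₀ - 1) * Real.exp (-(b * q.2)))) := by
    apply setLIntegral_congr_fun hsset
    intro q hq
    obtain ⟨hq1, hq2⟩ := hq
    beta_reduce
    rw [bgDeriv_det, abs_of_pos (show (0:ℝ) < q.2 from hq2),
      ← ENNReal.ofReal_mul (le_of_lt hq2), bgMap,
      bgPdf_substitution hb hq1 hq2, ENNReal.ofReal_mul]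
    exact mul_nonneg (div_nonneg (Real.Gamma_nonneg_of_nonneg (by linarith))
      (mul_nonneg (Real.Gamma_nonneg_of_nonneg h1.le) (Real.Gamma_nonneg_of_nonneg h2.le)))
      (mul_nonneg (rpow_nonneg hq1.1.le _) (rpow_nonneg (by linarith [hq1.2] : (0:ℝ) ≤ 1 - q.1) _))
  rw [step1, Measure.volume_eq_prod, ← Measure.prod_restrict,
    lintegral_prod_mul (f := fun u : ℝ => ENNReal.ofReal
        (Real.Gamma (a₁ + a₂) / (Real.Gamma a₁ * Real.Gamma a₂) *
          (u ^ (a₁ - 1) * (1 - u) ^ (a₂ - 1))))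
      (g := fun t : ℝ => ENNReal.ofReal
        (b ^ a₀ / Real.Gamma a₀ * (t ^ (a₀ - 1) * Real.exp (-(b * t)))))
      (by fun_prop) (by fun_prop),
    lintegral_beta h1 h2, lintegral_gammaPdf h0 hb, one_mul]

lemma bgPdf_nonneg {b a₀ a₁ a₂ : ℝ} (hb : 0 < b) (h0 : 0 < a₀) (h1 : 0 < a₁) (h2 : 0 < a₂)
    (l₁ l₂ : ℝ) : 0 ≤ bgPdf b a₀ a₁ a₂ l₁ l₂ := by
  unfold bgPdf
  split_ifs with h
  · obtain ⟨hl₁, hl₂⟩ := h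
    refine mul_nonneg (mul_nonneg (mul_nonneg ?_ ?_) ?_) ?_
    · exact div_nonneg (Real.Gamma_nonneg_of_nonneg (by linarith))
        (Real.Gamma_nonneg_of_nonneg h0.le)
    · exact rpow_nonneg (by positivity) _
    · exact mul_nonneg (mul_nonneg (div_nonneg (rpow_nonneg hb.le _)
        (Real.Gamma_nonneg_of_nonneg h1.le)) (rpow_nonneg hl₁.le _)) (Real.exp_pos _).le
    · exact mul_nonneg (mul_nonneg (div_nonneg (rpow_nonneg hb.le _)
        (Real.Gamma_nonneg_of_nonneg h2.le)) (rpow_nonneg hl₂.le _)) (Real.exp_pos _).le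
  · exact le_refl 0

lemma measurable_bgPdf (b a₀ a₁ a₂ : ℝ) :
    Measurable fun p : ℝ × ℝ => bgPdf b a₀ a₁ a₂ p.1 p.2 := by
  unfold bgPdf
  refine Measurable.ite ?_ (by fun_prop) measurable_const
  exact (measurableSet_lt measurable_const measurable_fst).inter
    (measurableSet_lt measurable_const measurable_snd)

lemma integral_bgPdf_eq_one {b a₀ a₁ a₂ : ℝ} (hb : 0 < b) (h0 : 0 < a₀) (h1 : 0 < a₁)
    (h2 : 0 < a₂) : ∫ p : ℝ × ℝ, bgPdf b a₀ a₁ a₂ p.1 p.2 = 1 := by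
  rw [integral_eq_lintegral_of_nonneg_ae (μ := (volume : Measure (ℝ × ℝ)))
    (f := fun p : ℝ × ℝ => bgPdf b a₀ a₁ a₂ p.1 p.2)
    (ae_of_all _ (fun p => bgPdf_nonneg hb h0 h1 h2 p.1 p.2))
    (measurable_bgPdf b a₀ a₁ a₂).aestronglyMeasurable,
    lintegral_bgPdf_eq_one hb h0 h1 h2, ENNReal.toReal_one]

lemma bgPdf_mul_inv_fst {b A₀ A₁ A₂ l₁ l₂ : ℝ} (hb : 0 < b) (h0 : 1 < A₀) (h1 : 1 < A₁)
    (h2 : 0 < A₂) :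
    bgPdf b A₀ A₁ A₂ l₁ l₂ * (1 / l₁) =
      (A₁ + A₂ - 1) * b / ((A₀ - 1) * (A₁ - 1)) * bgPdf b (A₀ - 1) (A₁ - 1) A₂ l₁ l₂ := by
  unfold bgPdf
  by_cases h : 0 < l₁ ∧ 0 < l₂
  · rw [if_pos h, if_pos h]
    obtain ⟨hl₁, hl₂⟩ := h
    have d1 : A₀ - 1 ≠ 0 := by intro hc; nlinarith [hc]
    have d2 : A₁ - 1 ≠ 0 := by intro hc; nlinarith [hc]
    have d6 : A₁ - 1 + A₂ ≠ 0 := by intro hc; nlinarith [hc]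
    have hG0 : Real.Gamma A₀ = (A₀ - 1) * Real.Gamma (A₀ - 1) := by
      conv_lhs => rw [show A₀ = (A₀ - 1) + 1 by ring]
      rw [Real.Gamma_add_one d1]
    have hG1 : Real.Gamma A₁ = (A₁ - 1) * Real.Gamma (A₁ - 1) := by
      conv_lhs => rw [show A₁ = (A₁ - 1) + 1 by ring]
      rw [Real.Gamma_add_one d2]
    have hG12 : Real.Gamma (A₁ + A₂) = (A₁ - 1 + A₂) * Real.Gamma (A₁ - 1 + A₂) := by
      conv_lhs => rw [show A₁ + A₂ = (A₁ - 1 + A₂) + 1 by ring]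
      rw [Real.Gamma_add_one d6]
    have hB : b ^ A₁ = b ^ (A₁ - 1) * b := by
      conv_lhs => rw [show A₁ = (A₁ - 1) + 1 by ring]
      rw [Real.rpow_add_one (ne_of_gt hb)]
    have hL : l₁ ^ (A₁ - 1) = l₁ ^ (A₁ - 1 - 1) * l₁ := by
      conv_lhs => rw [show A₁ - 1 = (A₁ - 1 - 1) + 1 by ring]
      rw [Real.rpow_add_one (ne_of_gt hl₁)]
    have hX : (b * (l₁ + l₂)) ^ (A₀ - 1 - (A₁ - 1) - A₂) = (b * (l₁ + l₂)) ^ (A₀ - A₁ - A₂) := by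
      congr 1; ring
    have d3 : Real.Gamma (A₀ - 1) ≠ 0 := (Real.Gamma_pos_of_pos (by linarith)).ne'
    have d4 : Real.Gamma (A₁ - 1) ≠ 0 := (Real.Gamma_pos_of_pos (by linarith)).ne'
    have d5 : l₁ ≠ 0 := ne_of_gt hl₁
    rw [hG0, hG1, hG12, hB, hL, hX]
    field_simp
    ring
  · rw [if_neg h, if_neg h, zero_mul, mul_zero]

lemma bg_mean {b A₀ A₁ A₂ : ℝ} (hb : 0 < b) (h0 : 1 < A₀) (h1 : 1 < A₁) (h2 : 0 < A₂) :
    ∫ p : ℝ × ℝ, 1 / p.1 ∂(bgMeasure b A₀ A₁ A₂) =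
      (A₁ + A₂ - 1) * b / ((A₀ - 1) * (A₁ - 1)) := by
  have hm : Measurable fun p : ℝ × ℝ => (bgPdf b A₀ A₁ A₂ p.1 p.2).toNNReal :=
    (measurable_bgPdf b A₀ A₁ A₂).real_toNNReal
  have hrw : bgMeasure b A₀ A₁ A₂ =
      volume.withDensity fun p : ℝ × ℝ => ((bgPdf b A₀ A₁ A₂ p.1 p.2).toNNReal : ℝ≥0∞) := rfl
  rw [hrw, integral_withDensity_eq_integral_smul hm]
  have heq : ∀ p : ℝ × ℝ, (bgPdf b A₀ A₁ A₂ p.1 p.2).toNNReal • (1 / p.1) =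
      (A₁ + A₂ - 1) * b / ((A₀ - 1) * (A₁ - 1)) * bgPdf b (A₀ - 1) (A₁ - 1) A₂ p.1 p.2 := by
    intro p
    rw [NNReal.smul_def, smul_eq_mul,
      Real.coe_toNNReal _ (bgPdf_nonneg hb (by linarith) (by linarith) h2 _ _),
      bgPdf_mul_inv_fst hb h0 h1 h2]
  simp_rw [heq]
  rw [integral_const_mul, integral_bgPdf_eq_one hb (by linarith) (by linarith) h2, mul_one]

lemma bgPdf_symm (b a₀ a₁ a₂ l₁ l₂ : ℝ) :
    bgPdf b a₀ a₂ a₁ l₂ l₁ = bgPdf b a₀ a₁ a₂ l₁ l₂ := by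
  unfold bgPdf
  by_cases h : 0 < l₁ ∧ 0 < l₂
  · rw [if_pos ⟨h.2, h.1⟩, if_pos h, add_comm a₂ a₁, add_comm l₂ l₁,
      show a₀ - a₂ - a₁ = a₀ - a₁ - a₂ by ring]
    ring
  · rw [if_neg (fun hc => h ⟨hc.2, hc.1⟩), if_neg h]

lemma bg_swap (b A₀ A₁ A₂ : ℝ) :
    ∫ p : ℝ × ℝ, 1 / p.2 ∂(bgMeasure b A₀ A₁ A₂) =
      ∫ p : ℝ × ℝ, 1 / p.1 ∂(bgMeasure b A₀ A₂ A₁) := by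
  have hm1 : Measurable fun p : ℝ × ℝ => (bgPdf b A₀ A₁ A₂ p.1 p.2).toNNReal :=
    (measurable_bgPdf b A₀ A₁ A₂).real_toNNReal
  have hm2 : Measurable fun p : ℝ × ℝ => (bgPdf b A₀ A₂ A₁ p.1 p.2).toNNReal :=
    (measurable_bgPdf b A₀ A₂ A₁).real_toNNReal
  rw [show bgMeasure b A₀ A₁ A₂ =
      volume.withDensity fun p : ℝ × ℝ => ((bgPdf b A₀ A₁ A₂ p.1 p.2).toNNReal : ℝ≥0∞) from rfl,
    show bgMeasure b A₀ A₂ A₁ =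
      volume.withDensity fun p : ℝ × ℝ => ((bgPdf b A₀ A₂ A₁ p.1 p.2).toNNReal : ℝ≥0∞) from rfl,
    integral_withDensity_eq_integral_smul hm1, integral_withDensity_eq_integral_smul hm2]
  have heq : ∀ p : ℝ × ℝ, (bgPdf b A₀ A₁ A₂ p.1 p.2).toNNReal • (1 / p.2) =
      (fun q : ℝ × ℝ => (bgPdf b A₀ A₂ A₁ q.1 q.2).toNNReal • (1 / q.1)) p.swap := by
    intro p
    simp only [Prod.fst_swap, Prod.snd_swap]
    rw [bgPdf_symm]
  simp_rw [heq]
  rw [Measure.volume_eq_prod, integral_prod_swap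
    (fun q : ℝ × ℝ => (bgPdf b A₀ A₂ A₁ q.1 q.2).toNNReal • (1 / q.1)),
    ← Measure.volume_eq_prod]

/-- Posterior means (Bayes estimates under squared error loss): if
`(λ₁, λ₂) ~ BG(W + b₀, a₀ + D₁ + D₂, a₁ + D₁, a₂ + D₂)` then, provided `a₁ + D₁ > 1`,
`E[1/λ₁] = (a₁ + a₂ + D₁ + D₂ − 1)(W + b₀) / ((a₀ + D₁ + D₂ − 1)(a₁ + D₁ − 1))`,
and symmetrically for `E[1/λ₂]` when `a₂ + D₂ > 1`. -/
theorem bayes_estimates_of_theta (b₀ a₀ a₁ a₂ W : ℝ)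
    (hb₀ : 0 < b₀) (ha₀ : 0 < a₀) (ha₁ : 0 < a₁) (ha₂ : 0 < a₂) (hW : 0 ≤ W)
    (D₁ D₂ : ℕ) (hpost : 1 < a₀ + D₁ + D₂) :
    (1 < a₁ + D₁ →
      ∫ p : ℝ × ℝ, 1 / p.1
          ∂(bgMeasure (W + b₀) (a₀ + D₁ + D₂) (a₁ + D₁) (a₂ + D₂)) =
        (a₁ + a₂ + D₁ + D₂ - 1) * (W + b₀) /
          ((a₀ + D₁ + D₂ - 1) * (a₁ + D₁ - 1))) ∧
    (1 < a₂ + D₂ →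
      ∫ p : ℝ × ℝ, 1 / p.2
          ∂(bgMeasure (W + b₀) (a₀ + D₁ + D₂) (a₁ + D₁) (a₂ + D₂)) =
        (a₁ + a₂ + D₁ + D₂ - 1) * (W + b₀) /
          ((a₀ + D₁ + D₂ - 1) * (a₂ + D₂ - 1))) := by
  have hcast1 : (0:ℝ) ≤ D₁ := Nat.cast_nonneg _
  have hcast2 : (0:ℝ) ≤ D₂ := Nat.cast_nonneg _
  have hbpos : 0 < W + b₀ := by linarith
  constructor
  · intro h1
    rw [bg_mean hbpos hpost h1 (by linarith)]
    ring
  · intro h2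
    rw [bg_swap, bg_mean hbpos hpost h2 (by linarith)]
    ring
end

section
/- Let n ≥ 1 and m ≥ 1 be integers, let R₁, …, R_m be nonnegative integers with R₁ + ⋯ + R_m ≤ n − m, and set γ_v = n − v + 1 − Σ_{u=1}^{v−1} R_u for 1 ≤ v ≤ m + 1. Let θ > 0, T > 0, let i be an integer with 1 ≤ i ≤ m, and let t be a real number with t/i < 1/θ; write s = 1/θ − t/i > 0. Then ∫_{0 < z₁ < ⋯ < z_m < T} exp(−s Σ_{h=1}^{m} z_h (1 + R_h)) dz₁ ⋯ dz_m = s^{−m} Σ_{v=0}^{m} (−1)^v e^{−s T (γ_{m−v+1} − γ_{m+1})} / [ (∏_{j=1}^{v} (γ_{m−v+1} − γ_{m−v+j+1})) (∏_{j=1}^{m−v} (γ_j − γ_{m−v+1})) ]. (This identity is the computational content of the conditional moment generating function of θ̂₁ given Z_{k:m:n} < Z_{m:m:n} < T and D₁ = i.) -/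
open MeasureTheory

section MgfAux
open Finset


lemma prod_neg' (s : Finset ℕ) (f : ℕ → ℝ) : ∏ i ∈ s, (-f i) = (-1)^s.card * ∏ i ∈ s, f i := by
  rw [← Finset.prod_const, ← Finset.prod_mul_distrib]
  exact Finset.prod_congr rfl fun i _ => (neg_one_mul _).symm

noncomputable def DD (b : ℕ → ℝ) (m v : ℕ) : ℝ :=
  (∏ j ∈ Finset.Icc 1 v, (b (m - v + 1) - b (m - v + j + 1))) *
    ∏ j ∈ Finset.Icc 1 (m - v), (b j - b (m - v + 1))

lemma DD_pos {b : ℕ → ℝ} {m : ℕ}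
    (hdec : ∀ u w : ℕ, 1 ≤ u → u < w → w ≤ m + 1 → b w < b u) {v : ℕ} (hv : v ≤ m) :
    0 < DD b m v := by
  refine mul_pos (Finset.prod_pos fun j hj => ?_) (Finset.prod_pos fun j hj => ?_) <;>
    rw [Finset.mem_Icc] at hj <;> refine sub_pos.mpr (hdec _ _ (by omega) (by omega) (by omega))

lemma term_eq {b : ℕ → ℝ} {M v : ℕ} (hv : v ≤ M) :
    (-1:ℝ)^v / DD b M v
      = (-1)^M * ∏ l ∈ (Finset.Icc 1 (M + 1)).erase (M + 1 - v), (b (M + 1 - v) - b l)⁻¹ := by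
  set k := M + 1 - v with hk
  have hsplit : (Finset.Icc 1 (M + 1)).erase k = Finset.Icc 1 (k - 1) ∪ Finset.Icc (k + 1) (M + 1) := by
    ext a
    simp only [Finset.mem_erase, Finset.mem_Icc, Finset.mem_union]
    omega
  have hdisj : Disjoint (Finset.Icc 1 (k - 1)) (Finset.Icc (k + 1) (M + 1)) := by
    rw [Finset.disjoint_left]
    intro a ha hb
    simp only [Finset.mem_Icc] at ha hb
    omega
  rw [hsplit, Finset.prod_union hdisj]
  have h2 : ∏ l ∈ Finset.Icc (k + 1) (M + 1), (b k - b l)⁻¹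
      = (∏ j ∈ Finset.Icc 1 v, (b (M - v + 1) - b (M - v + j + 1)))⁻¹ := by
    have hmap : Finset.Icc (k + 1) (M + 1) = (Finset.Icc 1 v).map (addRightEmbedding k) := by
      rw [map_add_right_Icc]
      congr 1 <;> omega
    rw [hmap, Finset.prod_map, ← Finset.prod_inv_distrib]
    refine Finset.prod_congr rfl fun j hj => ?_
    have e1 : M - v + 1 = k := by omega
    have e2 : M - v + j + 1 = addRightEmbedding k j := by
      simp only [addRightEmbedding, Function.Embedding.coeFn_mk]; omega
    rw [e1, ← e2]
  have h1 : ∏ l ∈ Finset.Icc 1 (k - 1), (b k - b l)⁻¹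
      = (-1:ℝ)^(M - v) * (∏ j ∈ Finset.Icc 1 (M - v), (b j - b (M - v + 1)))⁻¹ := by
    have e1 : k - 1 = M - v := by omega
    have e2 : M - v + 1 = k := by omega
    rw [e1, ← Finset.prod_inv_distrib]
    have : ∀ l ∈ Finset.Icc 1 (M - v), (b k - b l)⁻¹ = -((b l - b (M - v + 1))⁻¹) := by
      intro l _
      rw [e2, ← inv_neg, neg_sub]
    rw [Finset.prod_congr rfl this, prod_neg', Nat.card_Icc]
    norm_num
  rw [h1, h2, DD]
  have hsign : (-1:ℝ)^M = (-1:ℝ)^(M - v) * (-1:ℝ)^v := by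
    rw [← pow_add]; congr 1; omega
  rw [hsign]
  have e1 : M - v + 1 - 1 = M - v := by omega
  have h4 : (-1:ℝ)^(M-v) * (-1:ℝ)^(M-v) = 1 := by
    rw [← pow_add]; exact Even.neg_one_pow ⟨M - v, rfl⟩
  set P1 := ∏ j ∈ Finset.Icc 1 v, (b (M - v + 1) - b (M - v + j + 1)) with hP1
  set P2 := ∏ j ∈ Finset.Icc 1 (M - v), (b j - b (M - v + 1)) with hP2
  rw [div_eq_mul_inv, mul_inv]
  rw [show ((-1:ℝ))^(M-v) * (-1)^v * ((-1)^(M-v) * P2⁻¹ * P1⁻¹)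
      = ((-1)^(M-v)*(-1)^(M-v)) * ((-1)^v * (P1⁻¹ * P2⁻¹)) from by ring, h4, one_mul]

lemma leadingCoeff_lagrange_basis {s : Finset ℕ} {v : ℕ → ℝ} (hvs : Set.InjOn v s) {i : ℕ}
    (hi : i ∈ s) : (Lagrange.basis s v i).leadingCoeff = ∏ j ∈ s.erase i, (v i - v j)⁻¹ := by
  rw [Lagrange.basis, Polynomial.leadingCoeff_prod]
  refine Finset.prod_congr rfl fun j hj => ?_
  rw [Lagrange.basisDivisor, Polynomial.leadingCoeff_mul, Polynomial.leadingCoeff_C,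
    (Polynomial.monic_X_sub_C (v j)).leadingCoeff, mul_one]

lemma sum_inv_prod_sub {s : Finset ℕ} {v : ℕ → ℝ} (hvs : Set.InjOn v s) (h2 : 2 ≤ s.card) :
    ∑ i ∈ s, ∏ j ∈ s.erase i, (v i - v j)⁻¹ = 0 := by
  have hs : s.Nonempty := Finset.card_pos.mp (by omega)
  have h := Lagrange.sum_basis hvs hs
  have h2' := congrArg (fun p : Polynomial ℝ => p.coeff (s.card - 1)) h
  simp only [Polynomial.finset_sum_coeff] at h2'
  rw [Polynomial.coeff_one] at h2'
  rw [if_neg (by omega : ¬ (s.card - 1 = 0))] at h2'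
  rw [← h2']
  refine (Finset.sum_congr rfl fun i hi => ?_).symm
  have hnd := Lagrange.natDegree_basis hvs hi
  rw [← leadingCoeff_lagrange_basis hvs hi, Polynomial.leadingCoeff, hnd]

lemma alt_sum {b : ℕ → ℝ} {M : ℕ} (hM : 1 ≤ M)
    (hdec : ∀ u w : ℕ, 1 ≤ u → u < w → w ≤ M + 1 → b w < b u) :
    ∑ v ∈ Finset.range (M + 1), (-1:ℝ)^v / DD b M v = 0 := by
  have hinj : Set.InjOn b (Finset.Icc 1 (M + 1)) := by
    intro u hu w hw huw
    simp only [Finset.coe_Icc, Set.mem_Icc] at hu hw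
    by_contra hne
    rcases Nat.lt_or_ge u w with h | h
    · exact absurd huw (ne_of_gt (hdec u w hu.1 h hw.2))
    · exact absurd huw (ne_of_lt (hdec w u hw.1 (by omega) hu.2))
  have hL := sum_inv_prod_sub hinj (by rw [Nat.card_Icc]; omega)
  have := Finset.sum_nbij' (f := fun v => (-1:ℝ)^v / DD b M v)
    (g := fun k => (-1:ℝ)^M * ∏ l ∈ (Finset.Icc 1 (M + 1)).erase k, (b k - b l)⁻¹)
    (s := Finset.range (M + 1)) (t := Finset.Icc 1 (M + 1))
    (fun v => M + 1 - v) (fun k => M + 1 - k)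
    (by intro a ha; simp only [Finset.mem_range] at ha; simp only [Finset.mem_Icc]; omega)
    (by intro a ha; simp only [Finset.mem_Icc] at ha; simp only [Finset.mem_range]; omega)
    (by intro a ha; simp only [Finset.mem_range] at ha; omega)
    (by intro a ha; simp only [Finset.mem_Icc] at ha; omega)
    (by intro a ha; simp only [Finset.mem_range] at ha; exact term_eq (by omega))
  rw [this, ← Finset.mul_sum, hL, mul_zero]


def SS (m : ℕ) (L T : ℝ) : Set (Fin m → ℝ) := {z | StrictMono z ∧ ∀ h, L < z h ∧ z h < T}

lemma measurableSet_SS (m : ℕ) (L T : ℝ) : MeasurableSet (SS m L T) := by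
  have : SS m L T = (⋂ (p : Fin m × Fin m) (_ : p.1 < p.2), {z : Fin m → ℝ | z p.1 < z p.2}) ∩
      ⋂ h, ({z : Fin m → ℝ | L < z h} ∩ {z : Fin m → ℝ | z h < T}) := by
    ext z
    simp only [SS, Set.mem_setOf_eq, Set.mem_inter_iff, Set.mem_iInter, Set.mem_setOf_eq,
      Prod.forall]
    constructor
    · rintro ⟨h1, h2⟩
      exact ⟨fun i j hij => h1 hij, fun h => ⟨(h2 h).1, (h2 h).2⟩⟩
    · rintro ⟨h1, h2⟩
      exact ⟨fun i j hij => h1 i j hij, fun h => ⟨(h2 h).1, (h2 h).2⟩⟩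
  rw [this]
  have hA : MeasurableSet (⋂ (p : Fin m × Fin m) (_ : p.1 < p.2),
      {z : Fin m → ℝ | z p.1 < z p.2}) :=
    MeasurableSet.iInter fun p => MeasurableSet.iInter fun _ =>
      measurableSet_lt (measurable_pi_apply _) (measurable_pi_apply _)
  have hB : MeasurableSet (⋂ h, ({z : Fin m → ℝ | L < z h} ∩ {z : Fin m → ℝ | z h < T})) :=
    MeasurableSet.iInter fun h =>
      (measurableSet_lt measurable_const (measurable_pi_apply _)).inter
        (measurableSet_lt (measurable_pi_apply _) measurable_const)
  exact hA.inter hB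

lemma strictMono_cons_iff {m : ℕ} {x : ℝ} {w : Fin m → ℝ} :
    StrictMono (Fin.cons x w : Fin (m+1) → ℝ) ↔ StrictMono w ∧ ∀ h, x < w h := by
  constructor
  · intro hmono
    refine ⟨fun i j hij => ?_, fun h => ?_⟩
    · have := hmono (show i.succ < j.succ from Fin.succ_lt_succ_iff.mpr hij)
      simpa using this
    · have := hmono (Fin.succ_pos h)
      simpa using this
  · rintro ⟨hw, hx⟩ a b hab
    cases b using Fin.cases with
    | zero => exact absurd hab (Fin.not_lt_zero a)
    | succ j =>
      cases a using Fin.cases with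
      | zero => simpa using hx j
      | succ i =>
        have : i < j := by rwa [Fin.succ_lt_succ_iff] at hab
        simpa using hw this

lemma integrable_ind (m : ℕ) (L T : ℝ) (hL : 0 ≤ L) (s : ℝ) (hs : 0 < s) (c : ℕ → ℝ)
    (hc : ∀ h, h < m → 0 ≤ c h) :
    Integrable ((SS m L T).indicator fun z => Real.exp (-s * ∑ h : Fin m, z h * c h.1)) := by
  have hcont : Continuous fun z : Fin m → ℝ => Real.exp (-s * ∑ h : Fin m, z h * c h.1) := by
    apply Real.continuous_exp.comp
    exact continuous_const.mul (continuous_finset_sum _ fun h _ =>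
      (continuous_apply _).mul continuous_const)
  have hbox : MeasurableSet (Set.univ.pi fun _ : Fin m => Set.Icc L T) :=
    MeasurableSet.univ_pi fun _ => measurableSet_Icc
  refine Integrable.mono'
    (g := (Set.univ.pi fun _ : Fin m => Set.Icc L T).indicator fun _ => (1:ℝ)) ?_ ?_ ?_
  · rw [integrable_indicator_iff hbox]
    refine (integrableOn_const_iff (C := (1:ℝ))).mpr (Or.inr ?_)
    rw [volume_pi_pi]
    exact ENNReal.prod_lt_top fun i _ => by rw [Real.volume_Icc]; exact ENNReal.ofReal_lt_top
  · exact (hcont.measurable.indicator (measurableSet_SS m L T)).aestronglyMeasurable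
  · refine Filter.Eventually.of_forall fun z => ?_
    by_cases hz : z ∈ SS m L T
    · rw [Set.indicator_of_mem hz, Set.indicator_of_mem
        (by exact fun i _ => ⟨le_of_lt (hz.2 i).1, le_of_lt (hz.2 i).2⟩)]
      rw [Real.norm_eq_abs, Real.abs_exp]
      refine Real.exp_le_one_iff.mpr ?_
      have hsum : 0 ≤ ∑ h : Fin m, z h * c h.1 :=
        Finset.sum_nonneg fun h _ => mul_nonneg
          (le_trans hL (le_of_lt (hz.2 h).1)) (hc h.1 h.isLt)
      exact mul_nonpos_of_nonpos_of_nonneg (neg_nonpos.mpr (le_of_lt hs)) hsum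
    · rw [Set.indicator_of_notMem hz, norm_zero]
      exact Set.indicator_nonneg (fun _ _ => zero_le_one) z

lemma cons_mem_SS_iff {m : ℕ} {L T x : ℝ} {w : Fin m → ℝ} :
    (Fin.cons x w : Fin (m+1) → ℝ) ∈ SS (m+1) L T ↔ (L < x ∧ x < T) ∧ w ∈ SS m x T := by
  constructor
  · rintro ⟨h1, h2⟩
    have hx := h2 0
    rw [Fin.cons_zero] at hx
    have hm := strictMono_cons_iff.mp h1
    exact ⟨hx, hm.1, fun h => ⟨hm.2 h, by simpa using (h2 h.succ).2⟩⟩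
  · rintro ⟨hx, hw⟩
    refine ⟨strictMono_cons_iff.mpr ⟨hw.1, fun h => (hw.2 h).1⟩, fun h => ?_⟩
    cases h using Fin.cases with
    | zero => simpa using hx
    | succ j => simpa using ⟨lt_trans hx.1 (hw.2 j).1, (hw.2 j).2⟩

lemma exp_cons (m : ℕ) (s : ℝ) (c : ℕ → ℝ) (x : ℝ) (w : Fin m → ℝ) :
    Real.exp (-s * ∑ h : Fin (m+1), (Fin.cons x w : Fin (m+1) → ℝ) h * c h.1)
      = Real.exp (-s * (x * c 0)) * Real.exp (-s * ∑ h : Fin m, w h * c (h.1+1)) := by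
  rw [← Real.exp_add, Fin.sum_univ_succ]
  simp only [Fin.cons_zero, Fin.cons_succ, Fin.val_succ, Fin.val_zero]
  congr 1
  ring

lemma peel (s : ℝ) (hs : 0 < s) (m : ℕ) (c : ℕ → ℝ) (hc : ∀ h, h < m + 1 → 0 ≤ c h) (L T : ℝ)
    (hL : 0 ≤ L) :
    ∫ z in SS (m+1) L T, Real.exp (-s * ∑ h : Fin (m+1), z h * c h.1)
      = ∫ x in Set.Ioo L T,
          Real.exp (-s * (x * c 0)) *
            ∫ w in SS m x T, Real.exp (-s * ∑ h : Fin m, w h * c (h.1+1)) := by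
  set f : (Fin (m+1) → ℝ) → ℝ := fun z => Real.exp (-s * ∑ h : Fin (m+1), z h * c h.1) with hf
  set F : (Fin (m+1) → ℝ) → ℝ := (SS (m+1) L T).indicator f with hF
  have hFi : Integrable F := integrable_ind (m+1) L T hL s hs c hc
  have hmp := (measurePreserving_piFinSuccAbove (fun _ : Fin (m+1) => (volume : Measure ℝ)) 0).symm
  rw [← integral_indicator (measurableSet_SS (m+1) L T)]
  rw [show (volume : Measure (Fin (m+1) → ℝ)) = Measure.pi fun _ => volume from volume_pi,
    ← hmp.integral_comp']
  have hFi2 : Integrable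
      (fun p : ℝ × (Fin m → ℝ) => F ((MeasurableEquiv.piFinSuccAbove (fun _ => ℝ) 0).symm p))
      (((volume : Measure ℝ)).prod (Measure.pi fun _ => volume)) := by
    have h1 : Integrable (F ∘ (MeasurableEquiv.piFinSuccAbove (fun _ : Fin (m+1) => ℝ) 0).symm)
        (((volume : Measure ℝ)).prod (Measure.pi fun _ => volume)) := by
      rw [hmp.integrable_comp_emb (MeasurableEquiv.measurableEmbedding _),
        show (Measure.pi fun _ : Fin (m+1) => (volume : Measure ℝ)) = volume from volume_pi.symm]
      exact hFi
    exact h1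
  rw [integral_prod _ hFi2]
  have key : ∀ x : ℝ,
      (∫ w : Fin m → ℝ, F ((MeasurableEquiv.piFinSuccAbove (fun _ => ℝ) 0).symm (x, w))
          ∂(Measure.pi fun _ => volume))
        = (Set.Ioo L T).indicator (fun x => Real.exp (-s * (x * c 0)) *
            ∫ w in SS m x T, Real.exp (-s * ∑ h : Fin m, w h * c (h.1+1))) x := by
    intro x
    have hcons : ∀ w : Fin m → ℝ,
        (MeasurableEquiv.piFinSuccAbove (fun _ : Fin (m+1) => ℝ) 0).symm (x, w)
          = Fin.cons x w := by
      intro w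
      simp [MeasurableEquiv.piFinSuccAbove_symm_apply, Fin.insertNthEquiv, Fin.insertNth_zero]
    simp_rw [hcons]
    rw [show (Measure.pi fun _ : Fin m => (volume : Measure ℝ)) = volume from volume_pi.symm]
    by_cases hx : x ∈ Set.Ioo L T
    · rw [Set.indicator_of_mem hx]
      have hw : ∀ w : Fin m → ℝ, F (Fin.cons x w)
          = (SS m x T).indicator (fun w => Real.exp (-s * (x * c 0)) *
              Real.exp (-s * ∑ h : Fin m, w h * c (h.1+1))) w := by
        intro w
        by_cases hmem : w ∈ SS m x T
        · rw [Set.indicator_of_mem hmem, hF,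
            Set.indicator_of_mem (cons_mem_SS_iff.mpr ⟨⟨hx.1, hx.2⟩, hmem⟩), hf]
          exact exp_cons m s c x w
        · rw [Set.indicator_of_notMem hmem, hF, Set.indicator_of_notMem]
          intro hcontra
          exact hmem (cons_mem_SS_iff.mp hcontra).2
      simp_rw [hw]
      rw [integral_indicator (measurableSet_SS m x T), integral_const_mul]
    · rw [Set.indicator_of_notMem hx]
      have hw : ∀ w : Fin m → ℝ, F (Fin.cons x w) = 0 := by
        intro w
        rw [hF, Set.indicator_of_notMem]
        intro hcontra
        exact hx (Set.mem_Ioo.mpr (cons_mem_SS_iff.mp hcontra).1)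
      simp_rw [hw]
      exact integral_zero _ _
  simp_rw [key]
  rw [integral_indicator measurableSet_Ioo]


lemma int_exp_Ioo (k L T : ℝ) (hk : k ≠ 0) (hLT : L ≤ T) :
    ∫ x in Set.Ioo L T, Real.exp (k * x) = (Real.exp (k * T) - Real.exp (k * L)) / k := by
  rw [← integral_Ioc_eq_integral_Ioo, ← intervalIntegral.integral_of_le hLT,
    intervalIntegral.integral_comp_mul_left Real.exp hk, integral_exp, smul_eq_mul]
  field_simp


lemma DD_shift {b : ℕ → ℝ} {m v : ℕ} (hv : v ≤ m) :
    DD b (m+1) v = (b 1 - b (m - v + 2)) * DD (fun i => b (i+1)) m v := by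
  have e1 : m + 1 - v = m - v + 1 := by omega
  rw [DD, DD, e1]
  have h1 : ∏ j ∈ Finset.Icc 1 v, (b (m - v + 1 + 1) - b (m - v + 1 + j + 1))
      = ∏ j ∈ Finset.Icc 1 v, ((fun i => b (i+1)) (m - v + 1) - (fun i => b (i+1)) (m - v + j + 1)) := by
    refine Finset.prod_congr rfl fun j hj => ?_
    simp only
    congr 2 <;> omega
  have h2 : ∏ j ∈ Finset.Icc 1 (m - v + 1), (b j - b (m - v + 1 + 1))
      = (b 1 - b (m - v + 2)) *
        ∏ j ∈ Finset.Icc 1 (m - v), ((fun i => b (i+1)) j - (fun i => b (i+1)) (m - v + 1)) := by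
    rw [Finset.Icc_eq_cons_Ioc (by omega : 1 ≤ m - v + 1), Finset.prod_cons]
    have : Finset.Ioc 1 (m - v + 1) = (Finset.Icc 1 (m - v)).map (addRightEmbedding 1) := by
      rw [map_add_right_Icc, ← Finset.Icc_add_one_left_eq_Ioc]
    rw [this, Finset.prod_map]
    have e2 : m - v + 1 + 1 = m - v + 2 := by omega
    rw [e2]
    refine congrArg _ (Finset.prod_congr rfl fun j hj => ?_)
    simp only [addRightEmbedding, Function.Embedding.coeFn_mk]
  rw [h1, h2]
  ring
lemma main_formula (s : ℝ) (hs : 0 < s) (m : ℕ) :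
    ∀ (b : ℕ → ℝ), (∀ u w : ℕ, 1 ≤ u → u < w → w ≤ m + 1 → b w < b u) → b (m+1) = 0 →
      ∀ L T : ℝ, 0 ≤ L → L < T →
      (∫ z in SS m L T, Real.exp (-s * ∑ h : Fin m, z h * (b (h.1+1) - b (h.1+2))))
        = s ^ (-(m:ℤ)) * ∑ v ∈ Finset.range (m+1),
            (-1:ℝ)^v * Real.exp (-s*T*b (m-v+1)) * Real.exp (-s*L*(b 1 - b (m-v+1)))
              / DD b m v := by
  induction m with
  | zero =>
    intro b hdec hb0 L T hL hLT
    have hSS : SS 0 L T = Set.univ := by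
      ext z
      simp only [SS, Set.mem_setOf_eq, Set.mem_univ, iff_true]
      exact ⟨fun a => a.elim0, fun h => h.elim0⟩
    rw [hSS, Measure.restrict_univ]
    have hint : (fun z : Fin 0 → ℝ => Real.exp (-s * ∑ h : Fin 0, z h * (b (h.1+1) - b (h.1+2))))
        = fun _ => (1:ℝ) := by
      funext z
      simp
    rw [hint]
    have h1 : (Finset.Icc 1 0 : Finset ℕ) = ∅ := by decide
    rw [Finset.sum_range_one, DD, h1]
    simp only [Finset.prod_empty, one_mul, mul_one, pow_zero]
    rw [show (0:ℕ) - 0 + 1 = 1 by omega, hb0]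
    simp only [mul_zero, Real.exp_zero, sub_self, mul_one, one_mul, div_one, Nat.cast_zero,
      neg_zero, zpow_zero]
    rw [integral_const, smul_eq_mul, mul_one]
    rw [show (volume : Measure (Fin 0 → ℝ)) = Measure.pi (fun _ => volume) from volume_pi]
    simp [Measure.real]
  | succ m IH =>
    intro b hdec hb0 L T hL hLT
    set b' : ℕ → ℝ := fun i => b (i+1) with hb'
    have hdec' : ∀ u w : ℕ, 1 ≤ u → u < w → w ≤ m + 1 → b' w < b' u := by
      intro u w h1 h2 h3
      exact hdec (u+1) (w+1) (by omega) (by omega) (by omega)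
    have hb0' : b' (m+1) = 0 := hb0
    have hc : ∀ h, h < m + 1 → 0 ≤ (fun h => b (h+1) - b (h+2)) h := by
      intro h hh
      exact sub_nonneg.mpr (le_of_lt (hdec (h+1) (h+2) (by omega) (by omega) (by omega)))
    have hpeel2 : (∫ z in SS (m+1) L T,
        Real.exp (-s * ∑ h : Fin (m+1), z h * (b (h.1+1) - b (h.1+2))))
        = ∫ x in Set.Ioo L T, Real.exp (-s * (x * (b 1 - b 2))) *
            ∫ w in SS m x T, Real.exp (-s * ∑ h : Fin m, w h * (b' (h.1+1) - b' (h.1+2))) :=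
      peel s hs m (fun h => b (h+1) - b (h+2)) hc L T hL
    rw [hpeel2]
    have hinner : ∀ x ∈ Set.Ioo L T,
        Real.exp (-s * (x * (b 1 - b 2))) *
            (∫ w in SS m x T, Real.exp (-s * ∑ h : Fin m, w h * (b' (h.1+1) - b' (h.1+2))))
          = ∑ v ∈ Finset.range (m+1),
              ((s ^ (-(m:ℤ)) * ((-1:ℝ)^v * Real.exp (-s*T*b' (m-v+1)) / DD b' m v)) *
                Real.exp ((-s * (b 1 - b' (m-v+1))) * x)) := by
      intro x hx
      rw [IH b' hdec' hb0' x T (le_trans hL (le_of_lt hx.1)) hx.2, Finset.mul_sum,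
        Finset.mul_sum]
      refine Finset.sum_congr rfl fun v hv => ?_
      have hexp : Real.exp (-s * (x * (b 1 - b 2))) * Real.exp (-s*x*(b' 1 - b' (m-v+1)))
          = Real.exp ((-s * (b 1 - b' (m-v+1))) * x) := by
        rw [← Real.exp_add]
        congr 1
        show -s * (x * (b 1 - b 2)) + -s*x*(b (1+1) - b' (m-v+1)) = _
        ring
      rw [← hexp]
      ring
    rw [setIntegral_congr_fun measurableSet_Ioo hinner]
    have hInt : ∀ v ∈ Finset.range (m+1), IntegrableOn
        (fun x => (s ^ (-(m:ℤ)) * ((-1:ℝ)^v * Real.exp (-s*T*b' (m-v+1)) / DD b' m v)) *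
          Real.exp ((-s * (b 1 - b' (m-v+1))) * x)) (Set.Ioo L T) := by
      intro v hv
      have h : IntegrableOn (fun x => Real.exp ((-s * (b 1 - b' (m-v+1))) * x)) (Set.Icc L T) :=
        (Real.continuous_exp.comp
          (continuous_const.mul continuous_id)).continuousOn.integrableOn_compact isCompact_Icc
      exact (h.mono_set Set.Ioo_subset_Icc_self).const_mul _
    rw [integral_finset_sum _ hInt]
    have hterm : ∀ v ∈ Finset.range (m+1),
        (∫ x in Set.Ioo L T, (s ^ (-(m:ℤ)) * ((-1:ℝ)^v * Real.exp (-s*T*b' (m-v+1)) / DD b' m v)) *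
          Real.exp ((-s * (b 1 - b' (m-v+1))) * x))
        = s ^ (-(m+1:ℕ):ℤ) *
            ((-1:ℝ)^v * Real.exp (-s*T*b (m+1-v+1)) * Real.exp (-s*L*(b 1 - b (m+1-v+1)))
              / DD b (m+1) v)
          - s ^ (-(m+1:ℕ):ℤ) * Real.exp (-s*T*b 1) * ((-1:ℝ)^v / DD b (m+1) v) := by
      intro v hv
      rw [Finset.mem_range] at hv
      have hv' : v ≤ m := by omega
      have hcv : 0 < b 1 - b (m - v + 2) :=
        sub_pos.mpr (hdec 1 (m - v + 2) le_rfl (by omega) (by omega))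
      have hb'x : b' (m - v + 1) = b (m - v + 2) := by
        show b (m - v + 1 + 1) = b (m - v + 2)
        congr 1
      have hkne : -s * (b 1 - b (m - v + 2)) ≠ 0 :=
        mul_ne_zero (neg_ne_zero.mpr (ne_of_gt hs)) (ne_of_gt hcv)
      rw [integral_const_mul, hb'x, int_exp_Ioo _ _ _ hkne (le_of_lt hLT)]
      have hDD : DD b (m+1) v = (b 1 - b (m - v + 2)) * DD b' m v := DD_shift hv'
      have hidx : m + 1 - v + 1 = m - v + 2 := by omega
      rw [hidx, hDD]
      have hDD'pos : 0 < DD b' m v := DD_pos hdec' hv'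
      have hET : Real.exp (-s*T*b (m-v+2)) * Real.exp ((-s * (b 1 - b (m-v+2))) * T)
          = Real.exp (-s*T*b 1) := by
        rw [← Real.exp_add]; congr 1; ring
      have hEL : Real.exp ((-s * (b 1 - b (m-v+2))) * L) = Real.exp (-s*L*(b 1 - b (m-v+2))) := by
        congr 1; ring
      have hspow : s ^ (-(m:ℤ)) = s ^ (-(m+1:ℕ):ℤ) * s := by
        rw [← zpow_add_one₀ (ne_of_gt hs)]
        congr 1
        push_cast
        ring
      rw [hEL, hspow]
      set E1 := Real.exp (-s*T*b (m-v+2)) with hE1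
      set XT := Real.exp ((-s * (b 1 - b (m-v+2))) * T) with hXT
      set EL := Real.exp (-s*L*(b 1 - b (m-v+2))) with hEL2
      set D' := DD b' m v with hD'
      set cv := b 1 - b (m-v+2) with hcv2
      set SP := s ^ (-(m+1:ℕ):ℤ) with hSP
      rw [← hET]
      have hsne : s ≠ 0 := ne_of_gt hs
      have hcvne : cv ≠ 0 := ne_of_gt hcv
      have hD'ne : D' ≠ 0 := ne_of_gt hDD'pos
      field_simp
      ring
    rw [Finset.sum_congr rfl hterm, Finset.sum_sub_distrib, ← Finset.mul_sum, ← Finset.mul_sum]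
    have halt := alt_sum (b := b) (M := m+1) (by omega) hdec
    rw [Finset.sum_range_succ] at halt
    have hsum : ∑ v ∈ Finset.range (m+1), (-1:ℝ)^v / DD b (m+1) v
        = -((-1:ℝ)^(m+1) / DD b (m+1) (m+1)) := by linarith
    rw [hsum]
    conv_rhs => rw [Finset.sum_range_succ]
    rw [mul_add, show m + 1 - (m+1) + 1 = 1 by omega, sub_self, mul_zero, Real.exp_zero]
    ring

end MgfAux

/-- `γ_v = n − v + 1 − Σ_{u=1}^{v−1} R_u`, the number of surviving units at the time of the
`v`-th failure in a progressive censoring scheme with removals `R 1, R 2, …`. -/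
noncomputable def gam (n : ℕ) (R : ℕ → ℕ) (v : ℕ) : ℝ :=
  (n : ℝ) - v + 1 - ∑ u ∈ Finset.Icc 1 (v - 1), (R u : ℝ)

/-- The iterated integral over the ordered simplex `{0 < z₁ < ⋯ < z_m < T}` of
`exp(−s Σ_{h=1}^{m} z_h (1 + R_h))` equals
`s^{−m} Σ_{v=0}^{m} (−1)^v e^{−s T (γ_{m−v+1} − γ_{m+1})} / [⋯]`; this is the computational
content of the conditional MGF of `θ̂₁` given `Z_{k:m:n} < Z_{m:m:n} < T`, `D₁ = i`. -/
theorem mgf_integral_case_Zm (n m : ℕ) (hn : 1 ≤ n) (hm : 1 ≤ m) (R : ℕ → ℕ)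
    (hR : (∑ u ∈ Finset.Icc 1 m, R u) + m ≤ n)
    (θ T : ℝ) (hθ : 0 < θ) (hT : 0 < T)
    (i : ℕ) (hi1 : 1 ≤ i) (him : i ≤ m)
    (t s : ℝ) (ht : t / i < 1 / θ) (hs : s = 1 / θ - t / i) :
    ∫ z in {z : Fin m → ℝ | StrictMono z ∧ ∀ h, 0 < z h ∧ z h < T},
        Real.exp (-s * ∑ h, z h * (1 + (R (h.1 + 1) : ℝ))) =
      s ^ (-(m : ℤ)) *
        ∑ v ∈ Finset.range (m + 1),
          (-1 : ℝ) ^ v * Real.exp (-s * T * (gam n R (m - v + 1) - gam n R (m + 1))) /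
            ((∏ j ∈ Finset.Icc 1 v, (gam n R (m - v + 1) - gam n R (m - v + j + 1))) *
              (∏ j ∈ Finset.Icc 1 (m - v), (gam n R j - gam n R (m - v + 1)))) := by
  have hs' : 0 < s := by rw [hs]; linarith
  set b : ℕ → ℝ := fun v => gam n R v - gam n R (m + 1) with hb
  have hgam : ∀ u w : ℕ, 1 ≤ u → u < w → gam n R w < gam n R u := by
    intro u w h1 h2
    unfold gam
    have hsub : ∑ x ∈ Finset.Icc 1 (u - 1), (R x : ℝ) ≤ ∑ x ∈ Finset.Icc 1 (w - 1), (R x : ℝ) :=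
      Finset.sum_le_sum_of_subset_of_nonneg
        (Finset.Icc_subset_Icc_right (by omega)) (fun _ _ _ => Nat.cast_nonneg _)
    have hc : (u : ℝ) < (w : ℝ) := Nat.cast_lt.mpr h2
    linarith
  have hdec : ∀ u w : ℕ, 1 ≤ u → u < w → w ≤ m + 1 → b w < b u := by
    intro u w h1 h2 _
    simp only [hb]
    have := hgam u w h1 h2
    linarith
  have hb0 : b (m + 1) = 0 := sub_self _
  have hgam_diff : ∀ v : ℕ, 1 ≤ v → b v - b (v + 1) = 1 + (R v : ℝ) := by
    intro v hv
    obtain ⟨w, rfl⟩ : ∃ w, v = w + 1 := ⟨v - 1, by omega⟩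
    simp only [hb]
    unfold gam
    rw [show w + 1 - 1 = w by omega, show w + 1 + 1 - 1 = w + 1 by omega,
      Finset.sum_Icc_succ_top (by omega : 1 ≤ w + 1)]
    push_cast
    ring
  have hint : ∀ z : Fin m → ℝ,
      (-s * ∑ h : Fin m, z h * (1 + (R (h.1 + 1) : ℝ)))
        = -s * ∑ h : Fin m, z h * (b (h.1 + 1) - b (h.1 + 2)) := by
    intro z
    congr 1
    refine Finset.sum_congr rfl fun h _ => ?_
    rw [hgam_diff (h.1 + 1) (by omega)]
  have key := main_formula s hs' m b hdec hb0 0 T le_rfl hT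
  have h1 : (∫ z in SS m 0 T, Real.exp (-s * ∑ h : Fin m, z h * (1 + (R (h.1 + 1) : ℝ))))
      = ∫ z in SS m 0 T, Real.exp (-s * ∑ h : Fin m, z h * (b (h.1 + 1) - b (h.1 + 2))) :=
    integral_congr_ae (Filter.Eventually.of_forall fun z => congrArg Real.exp (hint z))
  rw [show {z : Fin m → ℝ | StrictMono z ∧ ∀ h, 0 < z h ∧ z h < T} = SS m 0 T from rfl,
    h1, key]
  refine congrArg _ (Finset.sum_congr rfl fun v hv => ?_)
  rw [show -s * (0:ℝ) = 0 by ring, zero_mul, Real.exp_zero, mul_one]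
  have hDD : DD b m v
      = (∏ j ∈ Finset.Icc 1 v, (gam n R (m - v + 1) - gam n R (m - v + j + 1))) *
        ∏ j ∈ Finset.Icc 1 (m - v), (gam n R j - gam n R (m - v + 1)) := by
    rw [DD]
    congr 1
    · refine Finset.prod_congr rfl fun j _ => ?_
      simp only [hb]
      ring
    · refine Finset.prod_congr rfl fun j _ => ?_
      simp only [hb]
      ring
  rw [hDD]
end
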